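/- arXiv:1506.04686 — 5 statements merged into one kernel-verified Lean document; each statement's English description precedes it below -/
import Mathlib

section
/- For all integers n ≥ 2 and d ≥ 1, the minimum cardinality of a percolating set for the d-neighbour bootstrap process on the d-dimensional grid [n]^d satisfies m([n]^d, d) ≥ n^{d-1}. -/
open Finset

/-- One step of the `r`-neighbour bootstrap process on `G`: infected vertices stay infected,
and a vertex with at least `r` infected neighbours becomes infected. -/
def bootstrapStep {V : Type*} (G : SimpleGraph V) (r : ℕ) (A : Set V) : Set V :=
  A ∪ {v | r ≤ (G.neighborSet v ∩ A).ncard}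

/-- `A` percolates under the `r`-neighbour bootstrap process on `G`. -/
def Percolates {V : Type*} (G : SimpleGraph V) (r : ℕ) (A : Set V) : Prop :=
  ∃ n, (bootstrapStep G r)^[n] A = Set.univ

/-- `m(G,r)`: the minimum cardinality of a percolating set. -/
noncomputable def minPerc {V : Type*} (G : SimpleGraph V) (r : ℕ) : ℕ :=
  sInf {n | ∃ A : Set V, Percolates G r A ∧ A.ncard = n}

/-- The `d`-dimensional hypercube `Q_d`. -/
def cube (d : ℕ) : SimpleGraph (Fin d → Bool) where
  Adj x y := ∃ i, x i ≠ y i ∧ ∀ j, j ≠ i → x j = y j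
  symm := ⟨fun x y ⟨i, h1, h2⟩ => ⟨i, h1.symm, fun j hj => (h2 j hj).symm⟩⟩
  loopless := ⟨fun x ⟨i, h1, _⟩ => h1 rfl⟩

/-- The grid `∏ [a i]`. -/
def gridGraph {d : ℕ} (a : Fin d → ℕ) : SimpleGraph (∀ i, Fin (a i)) where
  Adj x y := ∃ i, (((x i : ℕ) + 1 = (y i : ℕ)) ∨ ((y i : ℕ) + 1 = (x i : ℕ))) ∧
    ∀ j, j ≠ i → x j = y j
  symm := ⟨fun x y ⟨i, h1, h2⟩ => ⟨i, h1.symm, fun j hj => (h2 j hj).symm⟩⟩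
  loopless := ⟨fun x ⟨i, h1, _⟩ => by rcases h1 with h | h <;> omega⟩

/-- The star with `n` leaves, `K_{1,n}`; vertex `0` is the centre. -/
def starGraph (n : ℕ) : SimpleGraph (Fin (n + 1)) where
  Adj x y := (x = 0 ∧ y ≠ 0) ∨ (y = 0 ∧ x ≠ 0)
  symm := ⟨fun x y h => h.symm⟩
  loopless := ⟨fun x h => by rcases h with ⟨h1, h2⟩ | ⟨h1, h2⟩ <;> exact h2 h1⟩

/-- The edge `e` completes a copy of `H` in `G'`. -/
def CompletesCopy {V W : Type*} (H : SimpleGraph W) (G' : SimpleGraph V) (e : Sym2 V) : Prop :=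
  ∃ φ : W → V, Function.Injective φ ∧ (∀ a b, H.Adj a b → G'.Adj (φ a) (φ b)) ∧
    ∃ a b, H.Adj a b ∧ e = s(φ a, φ b)

/-- `F` is weakly `(G,H)`-saturated. -/
def WeaklySaturated {V W : Type*} (G : SimpleGraph V) (H : SimpleGraph W)
    (F : SimpleGraph V) : Prop :=
  F ≤ G ∧ ∃ (n : ℕ) (e : Fin n → Sym2 V), Function.Injective e ∧
    G.edgeSet \ F.edgeSet = Set.range e ∧
    ∀ i : Fin n, CompletesCopy H
      (SimpleGraph.fromEdgeSet (F.edgeSet ∪ e '' {j | j ≤ i})) (e i)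

/-- `wsat(G,H)`: the minimum number of edges of a weakly `(G,H)`-saturated graph. -/
noncomputable def wsat {V W : Type*} (G : SimpleGraph V) (H : SimpleGraph W) : ℕ :=
  sInf {m | ∃ F : SimpleGraph V, WeaklySaturated G H F ∧ F.edgeSet.ncard = m}

-- auxiliary
namespace Stmt13Aux

variable (n d : ℕ)

abbrev GV := ∀ _ : Fin d, Fin n

def GG : SimpleGraph (GV n d) := gridGraph (fun _ => n)

instance : DecidableRel (GG n d).Adj := fun x y =>
  decidable_of_iff (∃ i, (((x i : ℕ) + 1 = (y i : ℕ)) ∨ ((y i : ℕ) + 1 = (x i : ℕ))) ∧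
    ∀ j, j ≠ i → x j = y j) Iff.rfl

def EE (A : Finset (GV n d)) : ℕ :=
  ((A ×ˢ A).filter fun p => (GG n d).Adj p.1 p.2).card

def Phi (A : Finset (GV n d)) : ℤ :=
  2 * d * A.card - EE n d A

def newSet (A : Finset (GV n d)) : Finset (GV n d) :=
  (univ.filter fun v => d ≤ ((GG n d).neighborFinset v ∩ A).card) \ A

def stepF (A : Finset (GV n d)) : Finset (GV n d) := A ∪ newSet n d A

variable {n d}

lemma adj_iff {x y : GV n d} : (GG n d).Adj x y ↔
    ∃ i, (((x i : ℕ) + 1 = (y i : ℕ)) ∨ ((y i : ℕ) + 1 = (x i : ℕ))) ∧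
      ∀ j, j ≠ i → x j = y j := Iff.rfl

lemma nbr_inter (v : GV n d) (A : Finset (GV n d)) :
    (GG n d).neighborFinset v ∩ A = A.filter fun u => (GG n d).Adj v u := by
  ext u
  simp [SimpleGraph.mem_neighborFinset, and_comm]

lemma card_fiber_fst {S A : Finset (GV n d)} {v : GV n d} (hv : v ∈ S) :
    ((((S ×ˢ A).filter fun p => (GG n d).Adj p.1 p.2).filter fun p => p.1 = v).card)
      = (A.filter fun u => (GG n d).Adj v u).card := by
  refine Finset.card_bij' (fun p _ => p.2) (fun u _ => (v, u)) ?hi ?hj ?li ?ri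
  case hi =>
    intro p hp
    simp only [mem_filter, mem_product] at hp ⊢
    obtain ⟨⟨⟨_, h2⟩, h3⟩, h4⟩ := hp
    exact ⟨h2, h4 ▸ h3⟩
  case hj =>
    intro u hu
    simp only [mem_filter, mem_product] at hu ⊢
    exact ⟨⟨⟨hv, hu.1⟩, hu.2⟩, trivial⟩
  case li =>
    intro p hp
    simp only [mem_filter] at hp
    exact Prod.ext hp.2.symm rfl
  case ri =>
    intro u _
    rfl

lemma card_fiber_snd {S A : Finset (GV n d)} {v : GV n d} (hv : v ∈ S) :
    ((((A ×ˢ S).filter fun p => (GG n d).Adj p.1 p.2).filter fun p => p.2 = v).card)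
      = (A.filter fun u => (GG n d).Adj v u).card := by
  refine Finset.card_bij' (fun p _ => p.1) (fun u _ => (u, v)) ?hi ?hj ?li ?ri
  case hi =>
    intro p hp
    simp only [mem_filter, mem_product] at hp ⊢
    obtain ⟨⟨⟨h1, _⟩, h3⟩, h4⟩ := hp
    exact ⟨h1, ((GG n d).adj_comm _ _).mp (h4 ▸ h3)⟩
  case hj =>
    intro u hu
    simp only [mem_filter, mem_product] at hu ⊢
    exact ⟨⟨⟨hu.1, hv⟩, ((GG n d).adj_comm _ _).mp hu.2⟩, trivial⟩
  case li =>
    intro p hp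
    simp only [mem_filter] at hp
    exact Prod.ext rfl hp.2.symm
  case ri =>
    intro u _
    rfl

lemma EE_step (A : Finset (GV n d)) :
    EE n d A + 2 * d * (newSet n d A).card ≤ EE n d (stepF n d A) := by
  classical
  set S := newSet n d A with hS
  have hdisj : Disjoint A S := sdiff_disjoint.symm
  set T0 := (A ×ˢ A).filter fun p : GV n d × GV n d => (GG n d).Adj p.1 p.2 with hT0
  set T1 := (S ×ˢ A).filter fun p : GV n d × GV n d => (GG n d).Adj p.1 p.2 with hT1
  set T2 := (A ×ˢ S).filter fun p : GV n d × GV n d => (GG n d).Adj p.1 p.2 with hT2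
  -- each v ∈ S has ≥ d neighbours in A
  have hnbr : ∀ v ∈ S, d ≤ (A.filter fun u => (GG n d).Adj v u).card := by
    intro v hv
    rw [hS, newSet, mem_sdiff, mem_filter] at hv
    rw [← nbr_inter]
    exact hv.1.2
  -- card T1
  have hcard1 : d * S.card ≤ T1.card := by
    rw [Finset.card_eq_sum_card_fiberwise (f := Prod.fst) (t := S)
      (fun p hp => by rw [hT1, Finset.mem_coe, mem_filter, mem_product] at hp; exact Finset.mem_coe.mpr hp.1.1)]
    calc d * S.card = ∑ _v ∈ S, d := by rw [Finset.sum_const, smul_eq_mul, mul_comm]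
    _ ≤ _ := Finset.sum_le_sum fun v hv => le_of_le_of_eq (hnbr v hv) (card_fiber_fst hv).symm
  have hcard2 : d * S.card ≤ T2.card := by
    rw [Finset.card_eq_sum_card_fiberwise (f := Prod.snd) (t := S)
      (fun p hp => by rw [hT2, Finset.mem_coe, mem_filter, mem_product] at hp; exact Finset.mem_coe.mpr hp.1.2)]
    calc d * S.card = ∑ _v ∈ S, d := by rw [Finset.sum_const, smul_eq_mul, mul_comm]
    _ ≤ _ := Finset.sum_le_sum fun v hv => le_of_le_of_eq (hnbr v hv) (card_fiber_snd hv).symm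
  -- disjointness of T0 T1 T2
  have hd01 : Disjoint T0 T1 := by
    rw [Finset.disjoint_left]
    intro p hp hq
    rw [hT0, mem_filter, mem_product] at hp
    rw [hT1, mem_filter, mem_product] at hq
    exact (Finset.disjoint_left.mp hdisj hp.1.1 hq.1.1)
  have hd02 : Disjoint (T0 ∪ T1) T2 := by
    rw [Finset.disjoint_left]
    intro p hp hq
    rw [hT2, mem_filter, mem_product] at hq
    rcases Finset.mem_union.mp hp with h | h
    · rw [hT0, mem_filter, mem_product] at h
      exact (Finset.disjoint_left.mp hdisj h.1.2 hq.1.2)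
    · rw [hT1, mem_filter, mem_product] at h
      exact (Finset.disjoint_left.mp hdisj h.1.2 hq.1.2)
  have hsub : T0 ∪ T1 ∪ T2 ⊆ (stepF n d A ×ˢ stepF n d A).filter
      fun p : GV n d × GV n d => (GG n d).Adj p.1 p.2 := by
    intro p hp
    have hAsub : A ⊆ stepF n d A := Finset.subset_union_left
    have hSsub : S ⊆ stepF n d A := Finset.subset_union_right
    rcases Finset.mem_union.mp hp with hp | hp
    · rcases Finset.mem_union.mp hp with hp | hp
      · rw [hT0, mem_filter, mem_product] at hp
        exact mem_filter.mpr ⟨mem_product.mpr ⟨hAsub hp.1.1, hAsub hp.1.2⟩, hp.2⟩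
      · rw [hT1, mem_filter, mem_product] at hp
        exact mem_filter.mpr ⟨mem_product.mpr ⟨hSsub hp.1.1, hAsub hp.1.2⟩, hp.2⟩
    · rw [hT2, mem_filter, mem_product] at hp
      exact mem_filter.mpr ⟨mem_product.mpr ⟨hAsub hp.1.1, hSsub hp.1.2⟩, hp.2⟩
  have := Finset.card_le_card hsub
  rw [Finset.card_union_of_disjoint hd02, Finset.card_union_of_disjoint hd01] at this
  have : T0.card + T1.card + T2.card ≤ EE n d (stepF n d A) := this
  have hT0card : EE n d A = T0.card := rfl
  rw [hT0card]
  linarith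

lemma card_stepF (A : Finset (GV n d)) :
    (stepF n d A).card = A.card + (newSet n d A).card :=
  Finset.card_union_of_disjoint sdiff_disjoint.symm

lemma phi_step (A : Finset (GV n d)) : Phi n d (stepF n d A) ≤ Phi n d A := by
  have h1 := EE_step A
  have h2 := card_stepF A
  unfold Phi
  rw [h2]
  push_cast
  have h1' : (EE n d A : ℤ) + 2 * d * (newSet n d A).card ≤ EE n d (stepF n d A) := by
    exact_mod_cast h1
  linarith

lemma toFinset_bootstrapStep (S : Set (GV n d)) :
    (bootstrapStep (GG n d) d S).toFinite.toFinset = stepF n d (S.toFinite.toFinset) := by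
  classical
  ext v
  have hcard : ((GG n d).neighborSet v ∩ S).ncard
      = ((GG n d).neighborFinset v ∩ S.toFinite.toFinset).card := by
    rw [Set.ncard_eq_toFinset_card _ (Set.toFinite _)]
    congr 1
    ext u
    simp [SimpleGraph.mem_neighborFinset, Set.mem_inter_iff, SimpleGraph.mem_neighborSet,
      Set.Finite.mem_toFinset]
  simp only [bootstrapStep, stepF, newSet, Set.Finite.mem_toFinset, Set.mem_union,
    Set.mem_setOf_eq, Finset.mem_union, Finset.mem_sdiff, Finset.mem_filter, Finset.mem_univ,
    true_and, hcard]
  tauto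

lemma phi_le (S : Set (GV n d)) (k : ℕ) :
    Phi n d (((bootstrapStep (GG n d) d)^[k] S).toFinite.toFinset)
      ≤ Phi n d (S.toFinite.toFinset) := by
  induction k with
  | zero => simp
  | succ k ih =>
    rw [Function.iterate_succ_apply']
    calc Phi n d ((bootstrapStep (GG n d) d ((bootstrapStep (GG n d) d)^[k] S)).toFinite.toFinset)
        = Phi n d (stepF n d (((bootstrapStep (GG n d) d)^[k] S).toFinite.toFinset)) := by
          rw [toFinset_bootstrapStep]
      _ ≤ _ := le_trans (phi_step _) ih

-- counting lemmas
lemma count_coord (i : Fin d) (p : Fin n → Prop) [DecidablePred p] :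
    (univ.filter fun u : GV n d => p (u i)).card = (univ.filter p).card * n ^ (d - 1) := by
  classical
  rw [← Fintype.card_subtype, ← Fintype.card_subtype]
  have e1 : {u : GV n d // p (u i)} ≃ {x : Fin n × ({j : Fin d // j ≠ i} → Fin n) // p x.1} :=
    (Equiv.piSplitAt i (fun _ => Fin n)).subtypeEquiv fun u => Iff.rfl
  have e2 : {x : Fin n × ({j : Fin d // j ≠ i} → Fin n) // p x.1}
      ≃ {a : Fin n // p a} × ({j : Fin d // j ≠ i} → Fin n) :=
    Equiv.prodSubtypeFstEquivSubtypeProd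
  rw [Fintype.card_congr (e1.trans e2), Fintype.card_prod, Fintype.card_fun]
  congr 2
  · exact Fintype.card_fin n
  · rw [Fintype.card_subtype]
    have : (univ.filter fun j : Fin d => j ≠ i) = univ.erase i := by
      ext j; simp [Finset.mem_erase]
    rw [this, Finset.card_erase_of_mem (mem_univ i), Finset.card_univ, Fintype.card_fin]

lemma card_up (hn : 2 ≤ n) : (univ.filter fun a : Fin n => (a : ℕ) + 1 < n).card = n - 1 := by
  have h := Finset.card_filter_add_card_filter_not
    (s := (univ : Finset (Fin n))) (p := fun a : Fin n => (a : ℕ) + 1 < n)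
  have hneg : (univ.filter fun a : Fin n => ¬((a : ℕ) + 1 < n)) = {⟨n - 1, by omega⟩} := by
    ext a
    simp only [mem_filter, mem_univ, true_and, Finset.mem_singleton, Fin.ext_iff]
    have := a.isLt
    omega
  rw [hneg] at h
  simp only [Finset.card_singleton, Finset.card_univ, Fintype.card_fin] at h
  omega

lemma card_down (hn : 2 ≤ n) : (univ.filter fun a : Fin n => 0 < (a : ℕ)).card = n - 1 := by
  have h := Finset.card_filter_add_card_filter_not
    (s := (univ : Finset (Fin n))) (p := fun a : Fin n => 0 < (a : ℕ))
  have hneg : (univ.filter fun a : Fin n => ¬(0 < (a : ℕ))) = {⟨0, by omega⟩} := by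
    ext a
    simp only [mem_filter, mem_univ, true_and, Finset.mem_singleton, Fin.ext_iff]
    omega
  rw [hneg] at h
  simp only [Finset.card_singleton, Finset.card_univ, Fintype.card_fin] at h
  omega

lemma card_plus (hn : 2 ≤ n) (i : Fin d) :
    ((univ : Finset (GV n d × GV n d)).filter fun p =>
        ((p.1 i : ℕ) + 1 = (p.2 i : ℕ)) ∧ ∀ j, j ≠ i → p.1 j = p.2 j).card
      = (n - 1) * n ^ (d - 1) := by
  classical
  have key : ((univ : Finset (GV n d × GV n d)).filter fun p =>
        ((p.1 i : ℕ) + 1 = (p.2 i : ℕ)) ∧ ∀ j, j ≠ i → p.1 j = p.2 j).card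
      = ((univ : Finset (GV n d)).filter fun u => (u i : ℕ) + 1 < n).card := by
    refine Finset.card_bij' (fun p _ => p.1)
      (fun u hu => (u, Function.update u i ⟨(u i : ℕ) + 1, by
        simp only [mem_filter] at hu; exact hu.2⟩)) ?hi ?hj ?li ?ri
    case hi =>
      intro p hp
      simp only [mem_filter, mem_univ, true_and] at hp ⊢
      have := (p.2 i).isLt
      omega
    case hj =>
      intro u hu
      simp only [mem_filter, mem_univ, true_and] at hu ⊢
      constructor
      · rw [Function.update_self]
      · intro j hj
        rw [Function.update_of_ne hj]
    case li =>
      intro p hp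
      simp only [mem_filter, mem_univ, true_and] at hp
      refine Prod.ext rfl (funext fun j => ?_)
      by_cases hj : j = i
      · subst hj
        exact (Function.update_self _ _ _).trans (Fin.ext hp.1)
      · exact (Function.update_of_ne hj _ _).trans (hp.2 j hj)
    case ri =>
      intro u _
      rfl
  rw [key]
  exact (count_coord i (fun a : Fin n => (a : ℕ) + 1 < n)).trans (by rw [card_up hn])

lemma card_minus (hn : 2 ≤ n) (i : Fin d) :
    ((univ : Finset (GV n d × GV n d)).filter fun p =>
        ((p.2 i : ℕ) + 1 = (p.1 i : ℕ)) ∧ ∀ j, j ≠ i → p.1 j = p.2 j).card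
      = (n - 1) * n ^ (d - 1) := by
  classical
  have key : ((univ : Finset (GV n d × GV n d)).filter fun p =>
        ((p.2 i : ℕ) + 1 = (p.1 i : ℕ)) ∧ ∀ j, j ≠ i → p.1 j = p.2 j).card
      = ((univ : Finset (GV n d)).filter fun u => (u i : ℕ) + 1 < n).card := by
    refine Finset.card_bij' (fun p _ => p.2)
      (fun u hu => (Function.update u i ⟨(u i : ℕ) + 1, by
        simp only [mem_filter] at hu; exact hu.2⟩, u)) ?hi ?hj ?li ?ri
    case hi =>
      intro p hp
      simp only [mem_filter, mem_univ, true_and] at hp ⊢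
      have := (p.1 i).isLt
      omega
    case hj =>
      intro u hu
      simp only [mem_filter, mem_univ, true_and] at hu ⊢
      constructor
      · rw [Function.update_self]
      · intro j hj
        rw [Function.update_of_ne hj]
    case li =>
      intro p hp
      simp only [mem_filter, mem_univ, true_and] at hp
      refine Prod.ext (funext fun j => ?_) rfl
      by_cases hj : j = i
      · subst hj
        exact (Function.update_self _ _ _).trans (Fin.ext hp.1)
      · exact (Function.update_of_ne hj _ _).trans (hp.2 j hj).symm
    case ri =>
      intro u _
      rfl
  rw [key]
  exact (count_coord i (fun a : Fin n => (a : ℕ) + 1 < n)).trans (by rw [card_up hn])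

lemma witness_unique {x y : GV n d} {i i' : Fin d}
    (h : (((x i : ℕ) + 1 = (y i : ℕ)) ∨ ((y i : ℕ) + 1 = (x i : ℕ))) ∧
      ∀ j, j ≠ i → x j = y j)
    (h' : (((x i' : ℕ) + 1 = (y i' : ℕ)) ∨ ((y i' : ℕ) + 1 = (x i' : ℕ))) ∧
      ∀ j, j ≠ i' → x j = y j) : i = i' := by
  by_contra hne
  have := h'.2 i hne
  have hval : (x i : ℕ) = (y i : ℕ) := by rw [this]
  omega

lemma EE_univ (hn : 2 ≤ n) : EE n d (univ : Finset (GV n d)) = d * (2 * ((n - 1) * n ^ (d - 1))) := by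
  classical
  unfold EE
  rw [Finset.univ_product_univ]
  have hb : ((univ : Finset (GV n d × GV n d)).filter fun p => (GG n d).Adj p.1 p.2)
      = (univ : Finset (Fin d)).biUnion (fun i =>
          (univ : Finset (GV n d × GV n d)).filter fun p =>
            (((p.1 i : ℕ) + 1 = (p.2 i : ℕ)) ∨ ((p.2 i : ℕ) + 1 = (p.1 i : ℕ))) ∧
              ∀ j, j ≠ i → p.1 j = p.2 j) := by
    ext p
    simp only [mem_filter, mem_biUnion, mem_univ, true_and]
    exact adj_iff
  rw [hb, Finset.card_biUnion]
  · have hterm : ∀ i : Fin d,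
        ((univ : Finset (GV n d × GV n d)).filter fun p =>
          (((p.1 i : ℕ) + 1 = (p.2 i : ℕ)) ∨ ((p.2 i : ℕ) + 1 = (p.1 i : ℕ))) ∧
            ∀ j, j ≠ i → p.1 j = p.2 j).card = 2 * ((n - 1) * n ^ (d - 1)) := by
      intro i
      have hsplit : ((univ : Finset (GV n d × GV n d)).filter fun p =>
          (((p.1 i : ℕ) + 1 = (p.2 i : ℕ)) ∨ ((p.2 i : ℕ) + 1 = (p.1 i : ℕ))) ∧
            ∀ j, j ≠ i → p.1 j = p.2 j)
          = ((univ : Finset (GV n d × GV n d)).filter fun p =>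
              ((p.1 i : ℕ) + 1 = (p.2 i : ℕ)) ∧ ∀ j, j ≠ i → p.1 j = p.2 j)
            ∪ ((univ : Finset (GV n d × GV n d)).filter fun p =>
              ((p.2 i : ℕ) + 1 = (p.1 i : ℕ)) ∧ ∀ j, j ≠ i → p.1 j = p.2 j) := by
        ext p
        simp only [mem_filter, mem_univ, true_and, Finset.mem_union]
        tauto
      rw [hsplit, Finset.card_union_of_disjoint, card_plus hn, card_minus hn]
      · omega
      · rw [Finset.disjoint_left]
        intro p hp hq
        simp only [mem_filter, mem_univ, true_and] at hp hq
        omega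
    rw [Finset.sum_congr rfl (fun i _ => hterm i), Finset.sum_const, Finset.card_univ,
      Fintype.card_fin, smul_eq_mul]
  · intro i _ i' _ hne
    rw [Function.onFun, Finset.disjoint_left]
    intro p hp hq
    simp only [mem_filter, mem_univ, true_and] at hp hq
    exact hne (witness_unique hp hq)

lemma Phi_univ (hn : 2 ≤ n) (hd : 1 ≤ d) :
    Phi n d (univ : Finset (GV n d)) = 2 * d * n ^ (d - 1) := by
  unfold Phi
  rw [EE_univ hn, Finset.card_univ]
  have hcV : Fintype.card (GV n d) = n ^ d := by
    rw [Fintype.card_fun, Fintype.card_fin, Fintype.card_fin]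
  rw [hcV]
  have hdd : d - 1 + 1 = d := by omega
  have hpow : (n : ℤ) ^ d = (n : ℤ) ^ (d - 1) * n := by
    rw [← pow_succ, hdd]
  have hn1 : ((n - 1 : ℕ) : ℤ) = (n : ℤ) - 1 := by
    have : 1 ≤ n := by omega
    push_cast [this]
    ring
  push_cast [hn1]
  rw [hpow]
  ring

end Stmt13Aux

/-- `m([n]^d, d) ≥ n^(d-1)` for `n ≥ 2`, `d ≥ 1`. -/
theorem stmt13 (n d : ℕ) (hn : 2 ≤ n) (hd : 1 ≤ d) :
    n ^ (d - 1) ≤ minPerc (gridGraph (fun _ : Fin d => n)) d := by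
  classical
  apply le_csInf
  · exact ⟨(Set.univ : Set (Stmt13Aux.GV n d)).ncard, Set.univ, ⟨0, rfl⟩, rfl⟩
  · rintro m ⟨A, ⟨k, hk⟩, rfl⟩
    have hk' : (bootstrapStep (Stmt13Aux.GG n d) d)^[k] A = Set.univ := hk
    have h1 := Stmt13Aux.phi_le A k
    rw [hk'] at h1
    have huniv : (Set.univ : Set (Stmt13Aux.GV n d)).toFinite.toFinset = Finset.univ := by
      ext v; simp
    rw [huniv, Stmt13Aux.Phi_univ hn hd] at h1
    have h2 : Stmt13Aux.Phi n d (A.toFinite.toFinset) ≤ 2 * d * (A.toFinite.toFinset).card := by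
      unfold Stmt13Aux.Phi
      have : (0 : ℤ) ≤ Stmt13Aux.EE n d (A.toFinite.toFinset) := Int.natCast_nonneg _
      linarith
    have hcard : A.ncard = (A.toFinite.toFinset).card :=
      Set.ncard_eq_toFinset_card _ (Set.toFinite A)
    rw [hcard]
    have h3 : (2 * d * n ^ (d - 1) : ℤ) ≤ 2 * d * (A.toFinite.toFinset).card := le_trans h1 h2
    have h4 : 2 * d * n ^ (d - 1) ≤ 2 * d * (A.toFinite.toFinset).card := by exact_mod_cast h3
    have hdpos : 0 < 2 * d := by omega
    exact Nat.le_of_mul_le_mul_left h4 hdpos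
end

section
/- For all integers d ≥ 1 and a_1, …, a_d ≥ 2, the minimum cardinality of a percolating set for the 2-neighbour bootstrap process on the grid ∏_{i=1}^d [a_i] satisfies m(∏_{i=1}^d [a_i], 2) ≥ ⌈(Σ_{i=1}^d (a_i − 1))/2⌉ + 1. -/
open Finset

section BoxCovers

variable {d : ℕ} {a : Fin d → ℕ}

/-- membership of a grid vertex in a combinatorial box given by lower/upper corners in `ℕ`. -/
private def inBox (B : (Fin d → ℕ) × (Fin d → ℕ)) (x : ∀ i, Fin (a i)) : Prop :=
  ∀ i, B.1 i ≤ (x i : ℕ) ∧ (x i : ℕ) ≤ B.2 i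

private instance (B : (Fin d → ℕ) × (Fin d → ℕ)) (x : ∀ i, Fin (a i)) :
    Decidable (inBox B x) := by unfold inBox; infer_instance

private def boxCost (B : (Fin d → ℕ) × (Fin d → ℕ)) : ℕ := (∑ i, (B.2 i - B.1 i)) + 2

private def coverCost (C : Finset ((Fin d → ℕ) × (Fin d → ℕ))) : ℕ := ∑ B ∈ C, boxCost B

private def IsCover (C : Finset ((Fin d → ℕ) × (Fin d → ℕ))) (A : Set (∀ i, Fin (a i))) : Prop :=
  ∀ x ∈ A, ∃ B ∈ C, inBox B x

private lemma merge_coord (m1 M1 m2 M2 uu ww vv e1 e2 : ℕ)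
    (h1 : m1 ≤ uu) (h2 : uu ≤ M1) (h3 : m2 ≤ ww) (h4 : ww ≤ M2)
    (h5 : vv = uu ∨ ((vv + 1 = uu ∨ uu + 1 = vv) ∧ e1 = 1))
    (h6 : vv = ww ∨ ((vv + 1 = ww ∨ ww + 1 = vv) ∧ e2 = 1)) :
    max M1 (max M2 vv) - min m1 (min m2 vv) ≤ (M1 - m1) + (M2 - m2) + e1 + e2 := by
  omega

/-- Adding one newly infected vertex to a covered set: the cover cost does not increase. -/
private lemma vertex_step (C : Finset ((Fin d → ℕ) × (Fin d → ℕ))) (T : Set (∀ i, Fin (a i)))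
    (hC : IsCover C T) (v u w : ∀ i, Fin (a i)) (hu : u ∈ T) (hw : w ∈ T)
    (hvu : (gridGraph a).Adj v u) (hvw : (gridGraph a).Adj v w) (huw : u ≠ w) :
    ∃ C', IsCover C' (insert v T) ∧ coverCost C' ≤ coverCost C := by
  classical
  obtain ⟨i, hiv, hio⟩ := hvu
  obtain ⟨j, hjv, hjo⟩ := hvw
  by_cases hv : ∃ B ∈ C, inBox B v
  · refine ⟨C, ?_, le_rfl⟩
    intro x hx
    rcases hx with rfl | hx
    · exact hv
    · exact hC x hx
  obtain ⟨B1, hB1C, hB1u⟩ := hC u hu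
  obtain ⟨B2, hB2C, hB2w⟩ := hC w hw
  by_cases hBB : B1 = B2
  · exfalso
    apply hv
    refine ⟨B1, hB1C, fun k => ?_⟩
    subst hBB
    by_cases hki : k = i
    · subst hki
      by_cases hkj : k = j
      · subst hkj
        -- u and w both differ from v only in coordinate k
        have hne : (u k : ℕ) ≠ (w k : ℕ) := by
          intro h
          apply huw
          funext l
          by_cases hl : l = k
          · subst hl; exact Fin.val_injective h
          · rw [← hio l hl, ← hjo l hl]
        have h1 := hB1u k
        have h2 := hB2w k
        omega
      · have hvw' : v k = w k := hjo k hkj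
        have h2 := hB2w k
        rw [hvw']
        exact h2
    · have hvu' : v k = u k := hio k hki
      have h1 := hB1u k
      rw [hvu']
      exact h1
  · -- merge the two boxes and v into their bounding box
    set L : Fin d → ℕ := fun k => min (B1.1 k) (min (B2.1 k) ((v k : ℕ))) with hL
    set H : Fin d → ℕ := fun k => max (B1.2 k) (max (B2.2 k) ((v k : ℕ))) with hH
    set C' := insert (L, H) ((C.erase B1).erase B2) with hC'
    have hLH_v : inBox (L, H) v := fun k =>
      ⟨le_trans (min_le_right _ _) (min_le_right _ _),
       le_trans (le_max_right _ _) (le_max_right _ _)⟩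
    have hLH_1 : ∀ x : ∀ i, Fin (a i), inBox B1 x → inBox (L, H) x := by
      intro x hx k
      exact ⟨le_trans (min_le_left _ _) (hx k).1, le_trans (hx k).2 (le_max_left _ _)⟩
    have hLH_2 : ∀ x : ∀ i, Fin (a i), inBox B2 x → inBox (L, H) x := by
      intro x hx k
      exact ⟨le_trans (le_trans (min_le_right _ _) (min_le_left _ _)) (hx k).1,
        le_trans (hx k).2 (le_trans (le_max_left _ _) (le_max_right _ _))⟩
    refine ⟨C', ?_, ?_⟩
    · intro x hx
      rcases hx with rfl | hx
      · exact ⟨(L, H), Finset.mem_insert_self _ _, hLH_v⟩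
      obtain ⟨B, hBC, hBx⟩ := hC x hx
      by_cases h1 : B = B1
      · exact ⟨(L, H), Finset.mem_insert_self _ _, hLH_1 x (h1 ▸ hBx)⟩
      by_cases h2 : B = B2
      · exact ⟨(L, H), Finset.mem_insert_self _ _, hLH_2 x (h2 ▸ hBx)⟩
      · exact ⟨B, Finset.mem_insert_of_mem
          (Finset.mem_erase.2 ⟨h2, Finset.mem_erase.2 ⟨h1, hBC⟩⟩), hBx⟩
    · -- cost estimate
      have hmerge : boxCost (L, H) ≤ boxCost B1 + boxCost B2 := by
        unfold boxCost
        have key : ∀ k, H k - L k ≤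
            (B1.2 k - B1.1 k) + (B2.2 k - B2.1 k) +
              ((if k = i then 1 else 0) + (if k = j then 1 else 0)) := by
          intro k
          have h1 := hB1u k
          have h2 := hB2w k
          set e1 : ℕ := if k = i then 1 else 0 with he1
          set e2 : ℕ := if k = j then 1 else 0 with he2
          have h5 : (v k : ℕ) = u k ∨
              (((v k : ℕ) + 1 = u k ∨ (u k : ℕ) + 1 = v k) ∧ e1 = 1) := by
            by_cases hki : k = i
            · subst hki; exact Or.inr ⟨hiv, by rw [he1, if_pos rfl]⟩
            · exact Or.inl (by rw [hio k hki])
          have h6 : (v k : ℕ) = w k ∨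
              (((v k : ℕ) + 1 = w k ∨ (w k : ℕ) + 1 = v k) ∧ e2 = 1) := by
            by_cases hkj : k = j
            · subst hkj; exact Or.inr ⟨hjv, by rw [he2, if_pos rfl]⟩
            · exact Or.inl (by rw [hjo k hkj])
          have h := merge_coord (B1.1 k) (B1.2 k) (B2.1 k) (B2.2 k) (u k) (w k) (v k)
            e1 e2 h1.1 h1.2 h2.1 h2.2 h5 h6
          simp only [hL, hH]
          omega
        have hsum : ∑ k, (H k - L k) ≤
            ∑ k, ((B1.2 k - B1.1 k) + (B2.2 k - B2.1 k) +
              ((if k = i then 1 else 0) + (if k = j then 1 else 0))) :=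
          Finset.sum_le_sum fun k _ => key k
        rw [Finset.sum_add_distrib, Finset.sum_add_distrib, Finset.sum_add_distrib,
          Finset.sum_ite_eq' Finset.univ i (fun _ => 1),
          Finset.sum_ite_eq' Finset.univ j (fun _ => 1)] at hsum
        simp only [Finset.mem_univ, if_true] at hsum
        have hLH : ∑ k, ((L, H).2 k - (L, H).1 k) = ∑ k, (H k - L k) := rfl
        omega
      have hsplit : boxCost B1 + boxCost B2 + coverCost ((C.erase B1).erase B2) = coverCost C := by
        unfold coverCost
        have hB2e : B2 ∈ C.erase B1 := Finset.mem_erase.2 ⟨fun h => hBB h.symm, hB2C⟩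
        rw [add_assoc, Finset.add_sum_erase _ boxCost hB2e, Finset.add_sum_erase _ boxCost hB1C]
      have hins : coverCost C' ≤ boxCost (L, H) + coverCost ((C.erase B1).erase B2) := by
        unfold coverCost
        by_cases hmem : (L, H) ∈ (C.erase B1).erase B2
        · rw [hC', Finset.insert_eq_self.2 hmem]
          exact Nat.le_add_left _ _
        · rw [hC', Finset.sum_insert hmem]
      omega

/-- Adding a finite set of vertices, each with two infected neighbours in `T`. -/
private lemma finset_step (s : Finset (∀ i, Fin (a i))) (T : Set (∀ i, Fin (a i)))
    (C : Finset ((Fin d → ℕ) × (Fin d → ℕ))) (hC : IsCover C T)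
    (hs : ∀ v ∈ s, 2 ≤ (((gridGraph a).neighborSet v ∩ T).ncard)) :
    ∃ C', IsCover C' (T ∪ ↑s) ∧ coverCost C' ≤ coverCost C := by
  classical
  induction s using Finset.induction with
  | empty => exact ⟨C, by simpa using hC, le_rfl⟩
  | @insert v s' hvs ih =>
    obtain ⟨C', hC', hc'⟩ := ih fun x hx => hs x (Finset.mem_insert_of_mem hx)
    have h2 : 2 ≤ (((gridGraph a).neighborSet v ∩ T).ncard) := hs v (Finset.mem_insert_self _ _)
    have hfin : ((gridGraph a).neighborSet v ∩ T).Finite := Set.toFinite _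
    obtain ⟨u, hu, w, hw, huw⟩ := (Set.one_lt_ncard hfin).1 (by omega)
    obtain ⟨C'', hC'', hc''⟩ := vertex_step C' (T ∪ ↑s') hC' v u w
      (Or.inl hu.2) (Or.inl hw.2) hu.1 hw.1 huw
    refine ⟨C'', ?_, le_trans hc'' hc'⟩
    intro x hx
    apply hC''
    rcases hx with hx | hx
    · exact Set.mem_insert_iff.2 (Or.inr (Or.inl hx))
    · rcases Finset.mem_insert.1 hx with rfl | hx
      · exact Set.mem_insert _ _
      · exact Set.mem_insert_iff.2 (Or.inr (Or.inr hx))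

private lemma step_cover (A : Set (∀ i, Fin (a i))) (C : Finset ((Fin d → ℕ) × (Fin d → ℕ)))
    (hC : IsCover C A) :
    ∃ C', IsCover C' (bootstrapStep (gridGraph a) 2 A) ∧ coverCost C' ≤ coverCost C := by
  classical
  set s := (Set.toFinite {v | 2 ≤ (((gridGraph a).neighborSet v ∩ A).ncard)}).toFinset with hsdef
  obtain ⟨C', h1, h2⟩ := finset_step s A C hC (fun v hv => by
    rw [hsdef, Set.Finite.mem_toFinset] at hv; exact hv)
  refine ⟨C', ?_, h2⟩
  intro x hx
  apply h1
  rcases hx with hx | hx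
  · exact Or.inl hx
  · exact Or.inr (by rw [hsdef]; simp only [Set.Finite.coe_toFinset]; exact hx)

private lemma iterate_cover (n : ℕ) (A : Set (∀ i, Fin (a i)))
    (C : Finset ((Fin d → ℕ) × (Fin d → ℕ))) (hC : IsCover C A) :
    ∃ C', IsCover C' ((bootstrapStep (gridGraph a) 2)^[n] A) ∧ coverCost C' ≤ coverCost C := by
  induction n generalizing A C with
  | zero => exact ⟨C, hC, le_rfl⟩
  | succ n ih =>
    obtain ⟨C1, h1, hc1⟩ := step_cover A C hC
    obtain ⟨C2, h2, hc2⟩ := ih _ C1 h1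
    exact ⟨C2, by rwa [Function.iterate_succ_apply], le_trans hc2 hc1⟩

end BoxCovers

/-- key arithmetic identity for the monotone path. -/
private lemma sum_min_eq : ∀ (d : ℕ) (A : Fin d → ℕ) (t : ℕ),
    ∑ i, min (A i) (t - ∑ j ∈ Finset.univ.filter (fun j => j < i), A j) = min t (∑ i, A i) := by
  intro d
  induction d with
  | zero => intro A t; simp
  | succ d ih =>
    intro A t
    have hc : ∀ i : Fin d,
        ∑ j ∈ Finset.univ.filter (fun j => j < i.castSucc), A j
          = ∑ j ∈ Finset.univ.filter (fun j => j < i), A j.castSucc := by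
      intro i
      rw [Finset.sum_filter, Finset.sum_filter, Fin.sum_univ_castSucc]
      have hlast : ¬ (Fin.last d < i.castSucc) := by
        simp only [Fin.lt_def, Fin.val_last, Fin.coe_castSucc]
        have := i.isLt
        omega
      simp only [hlast, if_false, add_zero]
      simp only [Fin.castSucc_lt_castSucc_iff]
    have hclast : ∑ j ∈ Finset.univ.filter (fun j => j < Fin.last d), A j
        = ∑ j : Fin d, A j.castSucc := by
      rw [Finset.sum_filter, Fin.sum_univ_castSucc]
      simp [Fin.castSucc_lt_last]
    rw [Fin.sum_univ_castSucc (f := fun i => min (A i)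
      (t - ∑ j ∈ Finset.univ.filter (fun j => j < i), A j)),
      Fin.sum_univ_castSucc (f := A)]
    simp only [hc, hclast]
    rw [ih (fun i => A i.castSucc) t]
    omega

private def gridPath {d : ℕ} (a : Fin d → ℕ) (ha : ∀ i, 2 ≤ a i) (t : ℕ) : ∀ i, Fin (a i) :=
  fun i => ⟨min (a i - 1) (t - ∑ j ∈ Finset.univ.filter (fun j => j < i), (a j - 1)),
    by have := ha i; omega⟩

private lemma gridPath_sum {d : ℕ} (a : Fin d → ℕ) (ha : ∀ i, 2 ≤ a i) (t : ℕ) :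
    (∑ i, ((gridPath a ha t i : ℕ))) = min t (∑ i, (a i - 1)) :=
  sum_min_eq d (fun i => a i - 1) t

private lemma gridPath_mono {d : ℕ} (a : Fin d → ℕ) (ha : ∀ i, 2 ≤ a i) {s t : ℕ} (hst : s ≤ t)
    (i : Fin d) : ((gridPath a ha s i : ℕ)) ≤ ((gridPath a ha t i : ℕ)) := by
  unfold gridPath
  simp only
  omega

/-- Any box cover of the whole grid costs at least `∑ (a i - 1) + 2`. -/
private lemma cover_univ_cost {d : ℕ} {a : Fin d → ℕ} (ha : ∀ i, 2 ≤ a i)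
    (C : Finset ((Fin d → ℕ) × (Fin d → ℕ)))
    (hC : IsCover C (Set.univ : Set (∀ i, Fin (a i)))) :
    (∑ i, (a i - 1)) + 2 ≤ coverCost C := by
  classical
  set S := ∑ i, (a i - 1) with hS
  set p := gridPath a ha with hp
  set T : ((Fin d → ℕ) × (Fin d → ℕ)) → Finset ℕ :=
    fun B => (Finset.range (S + 1)).filter (fun t => inBox B (p t)) with hT
  have hTcard : ∀ B, (T B).card ≤ (∑ i, (B.2 i - B.1 i)) + 1 := by
    intro B
    by_cases h : (T B).Nonempty
    · set t0 := (T B).min' h with ht0def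
      have ht0 : t0 ∈ T B := Finset.min'_mem _ _
      have hsub : T B ⊆ Finset.Icc t0 (t0 + ∑ i, (B.2 i - B.1 i)) := by
        intro t ht
        have h1 : t0 ≤ t := Finset.min'_le _ _ ht
        have htR := Finset.mem_range.1 (Finset.mem_filter.1 ht).1
        have ht0R := Finset.mem_range.1 (Finset.mem_filter.1 ht0).1
        have htB := (Finset.mem_filter.1 ht).2
        have ht0B := (Finset.mem_filter.1 ht0).2
        have hcoord : ∀ i, (p t i : ℕ) - (p t0 i : ℕ) ≤ B.2 i - B.1 i := by
          intro i
          have := htB i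
          have := ht0B i
          omega
        have hmono : ∀ i, (p t0 i : ℕ) ≤ (p t i : ℕ) := fun i => gridPath_mono a ha h1 i
        have hsum1 : (∑ i, (p t i : ℕ)) = t := by
          rw [hp, gridPath_sum]; omega
        have hsum0 : (∑ i, (p t0 i : ℕ)) = t0 := by
          rw [hp, gridPath_sum]; omega
        have hstep : (∑ i, (p t i : ℕ)) ≤ (∑ i, (p t0 i : ℕ)) +
            ∑ i, ((p t i : ℕ) - (p t0 i : ℕ)) := by
          rw [← Finset.sum_add_distrib]
          apply Finset.sum_le_sum
          intro i _
          have := hmono i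
          omega
        have : ∑ i, ((p t i : ℕ) - (p t0 i : ℕ)) ≤ ∑ i, (B.2 i - B.1 i) :=
          Finset.sum_le_sum fun i _ => hcoord i
        exact Finset.mem_Icc.2 ⟨h1, by omega⟩
      calc (T B).card ≤ (Finset.Icc t0 (t0 + ∑ i, (B.2 i - B.1 i))).card :=
            Finset.card_le_card hsub
        _ = (∑ i, (B.2 i - B.1 i)) + 1 := by rw [Nat.card_Icc]; omega
    · rw [Finset.not_nonempty_iff_eq_empty.1 h]
      simp
  have hsub : Finset.range (S + 1) ⊆ C.biUnion T := by
    intro t ht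
    obtain ⟨B, hB, hBx⟩ := hC (p t) (Set.mem_univ _)
    exact Finset.mem_biUnion.2 ⟨B, hB, Finset.mem_filter.2 ⟨ht, hBx⟩⟩
  have h1 : S + 1 ≤ ∑ B ∈ C, (T B).card := by
    calc S + 1 = (Finset.range (S + 1)).card := by rw [Finset.card_range]
      _ ≤ (C.biUnion T).card := Finset.card_le_card hsub
      _ ≤ ∑ B ∈ C, (T B).card := Finset.card_biUnion_le
  have h2 : ∑ B ∈ C, (T B).card ≤ ∑ B ∈ C, ((∑ i, (B.2 i - B.1 i)) + 1) :=
    Finset.sum_le_sum fun B _ => hTcard B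
  have hCne : C.Nonempty := by
    rcases Finset.eq_empty_or_nonempty C with rfl | h
    · simp only [Finset.sum_empty] at h1; omega
    · exact h
  have hcost : coverCost C = (∑ B ∈ C, ((∑ i, (B.2 i - B.1 i)) + 1)) + C.card := by
    unfold coverCost boxCost
    rw [Finset.sum_add_distrib, Finset.sum_add_distrib, Finset.sum_const, Finset.sum_const,
      smul_eq_mul, smul_eq_mul]
    ring
  have hcard : 1 ≤ C.card := Finset.card_pos.2 hCne
  omega


/-- `m(∏ [a i], 2) ≥ ⌈(∑ (a i - 1))/2⌉ + 1`. -/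
theorem stmt14 (d : ℕ) (hd : 1 ≤ d) (a : Fin d → ℕ) (ha : ∀ i, 2 ≤ a i) :
    (⌈(∑ i, ((a i : ℚ) - 1)) / 2⌉ + 1 : ℤ) ≤ (minPerc (gridGraph a) 2 : ℤ) := by
  classical
  set S := ∑ i, (a i - 1) with hS
  set m := minPerc (gridGraph a) 2 with hm
  -- the set defining minPerc is nonempty
  have hne : {n | ∃ A : Set (∀ i, Fin (a i)), Percolates (gridGraph a) 2 A ∧ A.ncard = n}.Nonempty :=
    ⟨(Set.univ : Set (∀ i, Fin (a i))).ncard, Set.univ, ⟨0, rfl⟩, rfl⟩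
  obtain ⟨A, hA, hcard⟩ := Nat.sInf_mem hne
  -- build the initial cover of A by singleton boxes
  set F := (Set.toFinite A).toFinset with hF
  set C0 : Finset ((Fin d → ℕ) × (Fin d → ℕ)) :=
    F.image (fun x => ((fun i => (x i : ℕ)), (fun i => (x i : ℕ)))) with hC0
  have hC0cover : IsCover C0 A := by
    intro x hx
    refine ⟨((fun i => (x i : ℕ)), (fun i => (x i : ℕ))), ?_, fun i => ⟨le_rfl, le_rfl⟩⟩
    exact Finset.mem_image_of_mem _ ((Set.Finite.mem_toFinset _).2 hx)
  have hC0cost : coverCost C0 ≤ 2 * A.ncard := by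
    have h1 : coverCost C0 = 2 * C0.card := by
      unfold coverCost
      rw [Finset.sum_congr rfl (fun B hB => ?_), Finset.sum_const, smul_eq_mul, mul_comm]
      · obtain ⟨y, _, rfl⟩ := Finset.mem_image.1 hB
        unfold boxCost
        simp
    have h2 : C0.card ≤ F.card := Finset.card_image_le
    have h3 : F.card = A.ncard := by rw [hF, ← Set.ncard_eq_toFinset_card A (Set.toFinite A)]
    omega
  -- transport the cover along the percolation
  obtain ⟨n, hn⟩ := hA
  obtain ⟨C', hC'cover, hC'cost⟩ := iterate_cover n A C0 hC0cover
  rw [hn] at hC'cover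
  have hlow : S + 2 ≤ coverCost C' := cover_univ_cost ha C' hC'cover
  have hkey : S + 2 ≤ 2 * m := by
    have h4 := le_trans hC'cost hC0cost
    have hmdef : m = sInf {n | ∃ A : Set (∀ i, Fin (a i)),
        Percolates (gridGraph a) 2 A ∧ A.ncard = n} := rfl
    rw [hmdef, ← hcard]
    omega
  -- final arithmetic
  have hQ : (∑ i, ((a i : ℚ) - 1)) = (S : ℚ) := by
    rw [hS, Nat.cast_sum]
    apply Finset.sum_congr rfl
    intro i _
    have h2 := ha i
    rw [Nat.cast_sub (by omega : 1 ≤ a i)]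
    norm_num
  rw [hQ]
  have hceil : ⌈(S : ℚ) / 2⌉ ≤ (m : ℤ) - 1 := by
    rw [Int.ceil_le]
    rw [div_le_iff₀ (by norm_num : (0:ℚ) < 2)]
    push_cast
    have : (S : ℚ) + 2 ≤ 2 * (m : ℚ) := by exact_mod_cast hkey
    linarith
  omega
end

section
/- Let k ≥ ℓ ≥ 1 be integers and for 1 ≤ i ≤ k − ℓ define α_i ∈ ℝ^ℓ by α_{i,j} := i^j for 1 ≤ j ≤ ℓ. Then for every nonempty subset T ⊆ [ℓ], the vectors π_T(α_1), …, π_T(α_{k-ℓ}) are in general position in ℝ^{|T|}: every collection of at most |T| of these vectors (with distinct indices i) is linearly independent. -/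
open Polynomial Matrix

/-- Rolle step for positive roots. -/
lemma posRoots_le_derivative (q : ℝ[X]) (hq : q ≠ 0) (hq' : q.derivative ≠ 0) :
    (q.roots.toFinset.filter (fun x => 0 < x)).card ≤
      (q.derivative.roots.toFinset.filter (fun x => 0 < x)).card + 1 := by
  calc (q.roots.toFinset.filter (fun x => 0 < x)).card
      ≤ ((q.derivative.roots.toFinset.filter (fun x => 0 < x)) \
          (q.roots.toFinset.filter (fun x => 0 < x))).card + 1 := by
        refine Finset.card_le_diff_of_interleaved ?_
        intro x hx y hy hxy _
        simp only [Finset.mem_filter, Multiset.mem_toFinset, mem_roots hq] at hx hy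
        obtain ⟨z, hz1, hz2⟩ := exists_deriv_eq_zero hxy q.continuousOn
          (hx.1.trans hy.1.symm)
        refine ⟨z, ?_, hz1.1, hz1.2⟩
        simp only [Finset.mem_filter, Multiset.mem_toFinset, mem_roots hq']
        exact ⟨by rwa [IsRoot, ← q.deriv], hx.2.trans hz1.1⟩
    _ ≤ _ + 1 := by gcongr; exact Finset.sdiff_subset

/-- Weak Descartes rule: a nonzero real polynomial with at most `m` terms has
fewer than `m` distinct positive roots. -/
lemma descartes : ∀ m : ℕ, ∀ p : ℝ[X], p ≠ 0 → p.support.card ≤ m →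
    (p.roots.toFinset.filter (fun x => 0 < x)).card + 1 ≤ m := by
  intro m
  induction m with
  | zero =>
    intro p hp h
    exact absurd (Finset.card_eq_zero.mp (Nat.le_zero.mp h))
      (by simpa [Polynomial.support_eq_empty] using hp)
  | succ m ih =>
    intro p hp hcard
    set v := p.natTrailingDegree with hv
    have hdvd : X ^ v ∣ p := by
      rw [X_pow_dvd_iff]
      intro d hd
      exact coeff_eq_zero_of_lt_natTrailingDegree hd
    obtain ⟨q, hpq⟩ := hdvd
    have hq : q ≠ 0 := by rintro rfl; simp at hpq; exact hp hpq
    have hq0 : q.coeff 0 ≠ 0 := by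
      have : p.coeff v ≠ 0 := trailingCoeff_nonzero_iff_nonzero.mpr hp
      rw [hpq] at this
      have h2 : (X ^ v * q).coeff (0 + v) ≠ 0 := by rwa [zero_add]
      rwa [coeff_X_pow_mul] at h2
    -- the positive roots of p and q agree
    have hroots : p.roots.toFinset.filter (fun x => 0 < x)
        = q.roots.toFinset.filter (fun x => 0 < x) := by
      have : p.roots = v • ({0} : Multiset ℝ) + q.roots := by
        rw [hpq, roots_mul (hpq ▸ hp), roots_pow, roots_X]
      ext x
      simp only [Finset.mem_filter, Multiset.mem_toFinset, this, Multiset.mem_add,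
        Multiset.mem_nsmul, Multiset.mem_singleton]
      constructor
      · rintro ⟨h1 | h1, h2⟩
        · exact absurd h1.2.symm h2.ne
        · exact ⟨h1, h2⟩
      · rintro ⟨h1, h2⟩; exact ⟨Or.inr h1, h2⟩
    -- support of q is at most that of p
    have hsq : q.support.card ≤ m + 1 := by
      refine le_trans (Finset.card_le_card_of_injOn (· + v) ?_ (fun a _ b _ h => by simpa using h)) hcard
      intro n hn
      simp only [Finset.mem_coe, mem_support_iff] at hn ⊢
      rwa [hpq, coeff_X_pow_mul q v n]
    rcases eq_or_ne q.derivative 0 with hq' | hq'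
    · -- q is a nonzero constant, no roots at all
      have : q.roots = 0 := by
        rw [eq_C_of_derivative_eq_zero hq', roots_C]
      rw [hroots, this]
      simp
    · have hsq' : q.derivative.support.card + 1 ≤ m + 1 := by
        have h0 : (0 : ℕ) ∈ q.support := mem_support_iff.mpr hq0
        have : q.derivative.support.card ≤ (q.support.erase 0).card := by
          refine Finset.card_le_card_of_injOn (· + 1) ?_ (fun a _ b _ h => by simpa using h)
          intro n hn
          simp only [Finset.mem_coe, mem_support_iff, coeff_derivative] at hn
          have : q.coeff (n + 1) ≠ 0 := fun h => hn (by simp [h])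
          simp only [Finset.mem_coe, Finset.mem_erase, mem_support_iff]
          exact ⟨by omega, this⟩
        rw [Finset.card_erase_of_mem h0] at this
        omega
      have := ih q.derivative hq' (by omega)
      have := posRoots_le_derivative q hq hq'
      rw [hroots]
      omega

lemma eq_zero_of_many_pos_roots (p : ℝ[X]) (S : Finset ℝ)
    (hpos : ∀ x ∈ S, 0 < x) (hroot : ∀ x ∈ S, p.eval x = 0)
    (hcard : p.support.card ≤ S.card) : p = 0 := by
  by_contra hp
  have h := descartes S.card p hp hcard
  have hsub : S ⊆ p.roots.toFinset.filter (fun x => 0 < x) := by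
    intro x hx
    simp only [Finset.mem_filter, Multiset.mem_toFinset, mem_roots hp]
    exact ⟨hroot x hx, hpos x hx⟩
  have := Finset.card_le_card hsub
  omega

/-- Columns of the generalized Vandermonde matrix are independent. -/
lemma cols_indep {n l : ℕ} (I : Finset (Fin n)) (S : Finset (Fin l))
    (hcard : S.card ≤ I.card) :
    LinearIndependent ℝ
      (fun s : ↥S => fun i : ↥I => (((i : Fin n) : ℕ) + 1 : ℝ) ^ (((s : Fin l) : ℕ) + 1)) := by
  rw [Fintype.linearIndependent_iff]
  intro d hd s
  set p : ℝ[X] := ∑ s : ↥S, C (d s) * X ^ (((s : Fin l) : ℕ) + 1) with hp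
  have heval : ∀ i : ↥I, p.eval (((i : Fin n) : ℕ) + 1 : ℝ) = 0 := by
    intro i
    have := congrFun hd i
    simp only [Finset.sum_apply, Pi.smul_apply, smul_eq_mul, Pi.zero_apply] at this
    simpa [hp, eval_finset_sum] using this
  have hcoeff : ∀ s : ↥S, p.coeff (((s : Fin l) : ℕ) + 1) = d s := by
    intro s
    rw [hp, finset_sum_coeff]
    rw [Finset.sum_eq_single s]
    · simp
    · intro b _ hb
      have : ((b : Fin l) : ℕ) + 1 ≠ ((s : Fin l) : ℕ) + 1 := by
        intro h
        exact hb (Subtype.ext (Fin.ext (by omega)))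
      have hne : ¬ (((s : Fin l) : ℕ) + 1 = ((b : Fin l) : ℕ) + 1) := fun h => this h.symm
      simp [coeff_X_pow, hne]
      intro h
      exact absurd (Subtype.ext (Fin.ext h.symm)) hb
    · simp
  have hzero : p = 0 := by
    refine eq_zero_of_many_pos_roots p
      (Finset.image (fun i : ↥I => (((i : Fin n) : ℕ) + 1 : ℝ)) Finset.univ) ?_ ?_ ?_
    · intro x hx
      simp only [Finset.mem_image] at hx
      obtain ⟨i, _, rfl⟩ := hx
      positivity
    · intro x hx
      simp only [Finset.mem_image] at hx
      obtain ⟨i, _, rfl⟩ := hx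
      exact heval i
    · have h1 : (Finset.image (fun i : ↥I => (((i : Fin n) : ℕ) + 1 : ℝ)) Finset.univ).card
          = I.card := by
        rw [Finset.card_image_of_injective _ ?_, Finset.card_univ, Fintype.card_coe]
        intro a b h
        have : ((a : Fin n) : ℕ) = ((b : Fin n) : ℕ) := by
          have := h
          field_simp at this
          exact_mod_cast add_right_cancel this
        exact Subtype.ext (Fin.ext this)
      rw [h1]
      -- support p ⊆ image of exponents
      have h2 : p.support ⊆ Finset.image (fun s : ↥S => ((s : Fin l) : ℕ) + 1) Finset.univ := by
        intro m hm
        rw [mem_support_iff] at hm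
        by_contra hmem
        apply hm
        rw [hp, finset_sum_coeff]
        refine Finset.sum_eq_zero fun b _ => ?_
        have : (((b : Fin l) : ℕ) + 1) ≠ m := by
          intro h
          exact hmem (Finset.mem_image.mpr ⟨b, Finset.mem_univ b, h⟩)
        simp [coeff_X_pow, Ne.symm this]
      calc p.support.card ≤ _ := Finset.card_le_card h2
        _ ≤ Finset.univ.card := Finset.card_image_le
        _ = S.card := Fintype.card_coe S
        _ ≤ I.card := hcard
  have := hcoeff s
  rw [hzero] at this
  simpa using this.symm

/-- (General position of projected Vandermonde vectors.) For `k ≥ ℓ ≥ 1`,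
let `α_i ∈ ℝ^ℓ` (for `1 ≤ i ≤ k-ℓ`) be given by `α_{i,j} = i^j`. For every nonempty
`T ⊆ [ℓ]`, any collection of at most `|T|` of the projections `π_T(α_i)` (with distinct
indices `i`) is linearly independent in `ℝ^{|T|}`. Here the index `i : ↥I` corresponds to
the integer `i+1 ∈ {1,…,k-ℓ}` and the coordinate `t : ↥T` to the exponent `t+1 ∈ {1,…,ℓ}`. -/

theorem stmt15 (k l : ℕ) (hl : 1 ≤ l) (hk : l ≤ k)
    (T : Finset (Fin l)) (hT : T.Nonempty)
    (I : Finset (Fin (k - l))) (hI : I.card ≤ T.card) :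
    LinearIndependent ℝ
      (fun i : ↥I => fun t : ↥T => (((i : Fin (k - l)) : ℕ) + 1 : ℝ) ^ (((t : Fin l) : ℕ) + 1)) := by
  obtain ⟨S, hST, hScard⟩ := Finset.exists_subset_card_eq hI
  have hcards : Fintype.card ↥S = Fintype.card ↥I := by
    rw [Fintype.card_coe, Fintype.card_coe, hScard]
  let g : ↥S ≃ ↥I := Fintype.equivOfCardEq hcards
  -- the square matrix
  set M : Matrix ↥I ↥I ℝ :=
    fun i i' => (((i : Fin (k - l)) : ℕ) + 1 : ℝ) ^ ((((g.symm i' : ↥S) : Fin l) : ℕ) + 1)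
    with hM
  have hcols : LinearIndependent ℝ (fun i' : ↥I => Mᵀ i') := by
    have h := (cols_indep I S hScard.le).comp g.symm g.symm.injective
    exact h
  have hrows : LinearIndependent ℝ (fun i : ↥I => M i) :=
    Matrix.linearIndependent_rows_iff_isUnit.mpr
      (Matrix.linearIndependent_cols_iff_isUnit.mp hcols)
  -- transfer along the restriction map
  refine LinearIndependent.of_comp
    (LinearMap.funLeft ℝ ℝ (fun i' : ↥I => (⟨(g.symm i' : ↥S), hST (g.symm i').2⟩ : ↥T))) ?_
  exact hrows
end

section
/- Let t ≥ 1 be an integer and let p be a nonzero real polynomial with at most t nonzero coefficients (i.e., at most t nonzero monomial terms). Then p has at most t − 1 distinct positive real roots. -/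
open Polynomial Set

private lemma posroots_finite (p : Polynomial ℝ) (hp : p ≠ 0) :
    {x : ℝ | 0 < x ∧ Polynomial.eval x p = 0}.Finite :=
  (Polynomial.finite_setOf_isRoot hp).subset fun _ hx => hx.2

/-- Rolle-based counting: the number of positive roots of `q` is at most one more than
the number of positive roots of `q'`. -/
private lemma rolle_count (q : Polynomial ℝ) (hq : q ≠ 0)
    (hq' : Polynomial.derivative q ≠ 0) :
    {x : ℝ | 0 < x ∧ Polynomial.eval x q = 0}.ncard ≤
      {x : ℝ | 0 < x ∧ Polynomial.eval x (Polynomial.derivative q) = 0}.ncard + 1 := by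
  set T := {x : ℝ | 0 < x ∧ Polynomial.eval x (Polynomial.derivative q) = 0} with hT
  have hSfin := posroots_finite q hq
  have hTfin := posroots_finite _ hq'
  set n := {x : ℝ | 0 < x ∧ Polynomial.eval x q = 0}.ncard with hn
  set s := hSfin.toFinset with hs
  have hcard : s.card = n := (Set.ncard_eq_toFinset_card _ hSfin).symm
  let e : Fin n ≃o s := s.orderIsoOfFin hcard
  have hmem : ∀ j : Fin n, 0 < ((e j : s) : ℝ) ∧ Polynomial.eval ((e j : s) : ℝ) q = 0 := by
    intro j
    exact hSfin.mem_toFinset.mp (e j).2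
  have emono : ∀ {j k : Fin n}, j ≤ k → ((e j : s) : ℝ) ≤ ((e k : s) : ℝ) := by
    intro j k hjk
    exact_mod_cast e.monotone hjk
  have estrict : ∀ {j k : Fin n}, j < k → ((e j : s) : ℝ) < ((e k : s) : ℝ) := by
    intro j k hjk
    exact_mod_cast e.strictMono hjk
  let A : Fin (n - 1) → Fin n := fun i => i.castLE (Nat.sub_le n 1)
  let B : Fin (n - 1) → Fin n := fun i => ⟨(i : ℕ) + 1, by have := i.isLt; omega⟩
  have key : ∀ i : Fin (n - 1), ∃ c : ℝ, c ∈ T ∧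
      ((e (A i) : s) : ℝ) < c ∧ c < ((e (B i) : s) : ℝ) := by
    intro i
    have hab : ((e (A i) : s) : ℝ) < ((e (B i) : s) : ℝ) := by
      refine estrict ?_
      simp only [Fin.lt_def, A, B, Fin.coe_castLE]
      omega
    obtain ⟨c, hc, hc0⟩ := exists_deriv_eq_zero (f := fun x => Polynomial.eval x q) hab
      (q.continuous_aeval.continuousOn) ((hmem (A i)).2.trans (hmem (B i)).2.symm)
    refine ⟨c, ⟨lt_trans (hmem (A i)).1 hc.1, ?_⟩, hc.1, hc.2⟩
    rwa [Polynomial.deriv] at hc0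
  choose c hcT hcl hcr using key
  have hcmono : StrictMono c := by
    intro i j hij
    have h2 : ((e (B i) : s) : ℝ) ≤ ((e (A j) : s) : ℝ) := by
      refine emono ?_
      simp only [Fin.le_def, A, B, Fin.coe_castLE]
      exact hij
    exact (hcr i).trans (h2.trans_lt (hcl j))
  have himg : (Finset.univ.image c).card = n - 1 := by
    rw [Finset.card_image_of_injective _ hcmono.injective, Finset.card_univ, Fintype.card_fin]
  have hsub : Finset.univ.image c ⊆ hTfin.toFinset := by
    intro x hx
    simp only [Finset.mem_image] at hx
    obtain ⟨i, _, rfl⟩ := hx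
    exact hTfin.mem_toFinset.2 (hcT i)
  have hle : n - 1 ≤ T.ncard := by
    rw [Set.ncard_eq_toFinset_card _ hTfin, ← himg]
    exact Finset.card_le_card hsub
  omega

/-- Differentiating a polynomial with nonzero constant coefficient strictly decreases
the number of terms. -/
private lemma deriv_support (q : Polynomial ℝ) (h0 : q.coeff 0 ≠ 0) :
    (Polynomial.derivative q).support.card + 1 ≤ q.support.card := by
  have hsub : (Polynomial.derivative q).support ⊆ (q.support.erase 0).image (· - 1) := by
    intro m hm
    rw [Polynomial.mem_support_iff, Polynomial.coeff_derivative] at hm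
    have hne : q.coeff (m + 1) ≠ 0 := fun h => hm (by simp [h])
    exact Finset.mem_image.2 ⟨m + 1,
      Finset.mem_erase.2 ⟨by omega, Polynomial.mem_support_iff.2 hne⟩, by omega⟩
  have h0m : (0 : ℕ) ∈ q.support := Polynomial.mem_support_iff.2 h0
  have hpos : 1 ≤ q.support.card := Finset.card_pos.2 ⟨0, h0m⟩
  have h1 : (Polynomial.derivative q).support.card ≤ (q.support.erase 0).card :=
    (Finset.card_le_card hsub).trans Finset.card_image_le
  have h2 : (q.support.erase 0).card = q.support.card - 1 := Finset.card_erase_of_mem h0m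
  omega

/-- Strip powers of `X`: replace `p` by `q` with nonzero constant term, same positive roots. -/
private lemma decomp (p : Polynomial ℝ) (hp : p ≠ 0) :
    ∃ q : Polynomial ℝ, q ≠ 0 ∧ q.coeff 0 ≠ 0 ∧ q.support.card ≤ p.support.card ∧
      {x : ℝ | 0 < x ∧ Polynomial.eval x p = 0} =
        {x : ℝ | 0 < x ∧ Polynomial.eval x q = 0} := by
  set m := p.natTrailingDegree with hm
  have hdvd : Polynomial.X ^ m ∣ p :=
    Polynomial.X_pow_dvd_iff.2 fun d hd => Polynomial.coeff_eq_zero_of_lt_natTrailingDegree hd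
  obtain ⟨q, hq⟩ := hdvd
  have hq0 : q ≠ 0 := by rintro rfl; simp at hq; exact hp hq
  have hcoeff : ∀ d : ℕ, p.coeff (d + m) = q.coeff d := by
    intro d; rw [hq, Polynomial.coeff_X_pow_mul]
  have hc0 : q.coeff 0 ≠ 0 := by
    have h := mt Polynomial.trailingCoeff_eq_zero.mp hp
    rw [← hcoeff 0]
    simpa [Polynomial.trailingCoeff, hm] using h
  refine ⟨q, hq0, hc0, ?_, ?_⟩
  · apply Finset.card_le_card_of_injOn (fun d => d + m)
    · intro d hd
      rw [Finset.mem_coe, Polynomial.mem_support_iff] at hd ⊢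
      rwa [hcoeff d]
    · intro a _ b _ h
      exact Nat.add_right_cancel h
  · ext x
    simp only [Set.mem_setOf_eq, hq, Polynomial.eval_mul, Polynomial.eval_pow,
      Polynomial.eval_X]
    constructor
    · rintro ⟨hx, hxe⟩
      refine ⟨hx, ?_⟩
      rcases mul_eq_zero.1 hxe with h | h
      · exact absurd h (pow_ne_zero _ hx.ne')
      · exact h
    · rintro ⟨hx, hxe⟩
      exact ⟨hx, by rw [hxe, mul_zero]⟩

private lemma aux : ∀ t : ℕ, ∀ p : Polynomial ℝ, p ≠ 0 → p.support.card ≤ t + 1 →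
    {x : ℝ | 0 < x ∧ Polynomial.eval x p = 0}.ncard ≤ t := by
  intro t
  induction t with
  | zero =>
    intro p hp hcard
    obtain ⟨q, hq0, hc0, hqcard, hset⟩ := decomp p hp
    rw [hset]
    have hdeg : q.natDegree = 0 := by
      by_contra hne
      have h1 : q.natDegree ∈ q.support := Polynomial.natDegree_mem_support_of_nonzero hq0
      have h2 : (0 : ℕ) ∈ q.support := Polynomial.mem_support_iff.2 hc0
      have : 2 ≤ q.support.card := by
        have := Finset.one_lt_card.2 ⟨q.natDegree, h1, 0, h2, hne⟩
        omega
      omega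
    have hqC : q = Polynomial.C (q.coeff 0) := Polynomial.eq_C_of_natDegree_eq_zero hdeg
    have : {x : ℝ | 0 < x ∧ Polynomial.eval x q = 0} = ∅ := by
      ext x
      simp only [Set.mem_setOf_eq, Set.mem_empty_iff_false, iff_false, not_and]
      intro _
      rw [hqC]
      simpa using hc0
    rw [this]
    simp
  | succ t ih =>
    intro p hp hcard
    obtain ⟨q, hq0, hc0, hqcard, hset⟩ := decomp p hp
    rw [hset]
    by_cases hd : Polynomial.derivative q = 0
    · have hqC : q = Polynomial.C (q.coeff 0) := Polynomial.eq_C_of_derivative_eq_zero hd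
      have : {x : ℝ | 0 < x ∧ Polynomial.eval x q = 0} = ∅ := by
        ext x
        simp only [Set.mem_setOf_eq, Set.mem_empty_iff_false, iff_false, not_and]
        intro _
        rw [hqC]
        simpa using hc0
      rw [this]
      simp
    · have hds := deriv_support q hc0
      have hdcard : (Polynomial.derivative q).support.card ≤ t + 1 := by omega
      have hih := ih (Polynomial.derivative q) hd hdcard
      have hr := rolle_count q hq0 hd
      omega

/-- A nonzero real polynomial with at most `t` nonzero terms has at most
`t - 1` distinct positive real roots. -/
theorem stmt16 (t : ℕ) (ht : 1 ≤ t) (p : Polynomial ℝ) (hp : p ≠ 0)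
    (hterms : p.support.card ≤ t) :
    {x : ℝ | 0 < x ∧ Polynomial.eval x p = 0}.ncard ≤ t - 1 := by
  obtain ⟨s, rfl⟩ := Nat.exists_eq_add_of_le ht
  have := aux s p hp (by omega)
  omega
end

section
/- Let k ≥ ℓ ≥ 0 be integers. For 1 ≤ i ≤ k − ℓ, let α_i ∈ ℝ^ℓ be given by α_{i,j} := i^j for 1 ≤ j ≤ ℓ, let e_i denote the i-th standard basis vector of ℝ^{k-ℓ}, and set v_i := α_i ⊕ e_i ∈ ℝ^k (the concatenation of α_i and e_i). Then X := span{v_1, …, v_{k-ℓ}} is a subspace of ℝ^k of dimension k − ℓ and every nonzero vector x ∈ X satisfies |supp(x)| ≥ ℓ + 1. -/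
open Polynomial in
/-- A nonzero real polynomial has fewer distinct positive roots than nonzero coefficients. -/
lemma descartes_aux : ∀ n : ℕ, ∀ p : ℝ[X], p.natDegree ≤ n → p ≠ 0 →
    ∀ T : Finset ℝ, (∀ t ∈ T, 0 < t ∧ p.IsRoot t) → T.card < p.support.card := by
  intro n
  induction n with
  | zero =>
    intro p hdeg hp T hT
    have hpc : p = C (p.coeff 0) := eq_C_of_natDegree_le_zero hdeg
    have hc0 : p.coeff 0 ≠ 0 := fun h => hp (by rw [hpc, h, map_zero])
    have hT0 : T = ∅ := by
      by_contra hne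
      obtain ⟨t, ht⟩ := Finset.nonempty_iff_ne_empty.2 hne
      have := (hT t ht).2
      rw [IsRoot, hpc, eval_C] at this
      exact hc0 this
    rw [hT0]
    simpa [Finset.card_pos, support_nonempty] using hp
  | succ n ih =>
    intro p hdeg hp T hT
    by_cases h0 : p.coeff 0 = 0
    · -- p = divX p * X
      have hpe : p = p.divX * X := by
        conv_lhs => rw [← p.divX_mul_X_add]
        rw [h0, map_zero, add_zero]
      have hq : p.divX ≠ 0 := fun h => hp (by rw [hpe, h, zero_mul])
      have hqd : p.divX.natDegree ≤ n := by
        have h1 : p.natDegree ≠ 0 := by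
          intro h
          exact hp (by rw [eq_C_of_natDegree_le_zero h.le, h0, map_zero])
        have := p.natDegree_divX_eq_natDegree_tsub_one
        omega
      have hroots : ∀ t ∈ T, 0 < t ∧ p.divX.IsRoot t := by
        intro t ht
        obtain ⟨htpos, htroot⟩ := hT t ht
        refine ⟨htpos, ?_⟩
        rw [IsRoot, hpe, eval_mul, eval_X] at htroot
        rcases mul_eq_zero.1 htroot with h | h
        · exact h
        · exact absurd h htpos.ne'
      have hle : p.divX.support.card ≤ p.support.card := by
        apply Finset.card_le_card_of_injOn (fun e => e + 1)
        · intro e he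
          rw [Finset.mem_coe, mem_support_iff] at he ⊢
          rwa [← coeff_divX]
        · intro a _ b _ hab; simpa using hab
      exact lt_of_lt_of_le (ih p.divX hqd hq T hroots) hle
    · -- constant coefficient nonzero
      by_cases hd : derivative p = 0
      · have hT0 : T = ∅ := by
          by_contra hne
          obtain ⟨t, ht⟩ := Finset.nonempty_iff_ne_empty.2 hne
          have := (hT t ht).2
          rw [IsRoot, eq_C_of_derivative_eq_zero hd, eval_C] at this
          have : p = 0 := by rw [eq_C_of_derivative_eq_zero hd, this, map_zero]
          exact hp this
        rw [hT0]
        simpa [Finset.card_pos, support_nonempty] using hp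
      · set D := (derivative p).roots.toFinset.filter (fun z => 0 < z) with hD
        -- interleaving via Rolle
        have hTD : T.card ≤ (D \ T).card + 1 := by
          apply Finset.card_le_diff_of_interleaved
          intro x hx y hy hxy _
          obtain ⟨hxpos, hxroot⟩ := hT x hx
          obtain ⟨_, hyroot⟩ := hT y hy
          obtain ⟨z, hz1, hz2⟩ := exists_deriv_eq_zero hxy p.continuousOn
            (by rw [hxroot, hyroot])
          refine ⟨z, ?_, hz1⟩
          rw [hD, Finset.mem_filter, Multiset.mem_toFinset, mem_roots hd]
          rw [Polynomial.deriv] at hz2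
          exact ⟨hz2, hxpos.trans hz1.1⟩
        have hDcard : D.card < (derivative p).support.card := by
          apply ih
          · have h1 : p.natDegree ≠ 0 := by
              intro h
              exact hd (by rw [eq_C_of_natDegree_le_zero h.le, derivative_C])
            have := natDegree_derivative_lt h1
            omega
          · exact hd
          · intro t ht
            rw [hD, Finset.mem_filter, Multiset.mem_toFinset, mem_roots hd] at ht
            exact ⟨ht.2, ht.1⟩
        have hderiv : (derivative p).support.card + 1 ≤ p.support.card := by
          have h0mem : (0 : ℕ) ∈ p.support := mem_support_iff.2 h0
          have : (derivative p).support.card ≤ (p.support.erase 0).card := by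
            apply Finset.card_le_card_of_injOn (fun e => e + 1)
            · intro e he
              rw [Finset.mem_coe, mem_support_iff, coeff_derivative] at he
              rw [Finset.mem_coe, Finset.mem_erase]
              refine ⟨Nat.succ_ne_zero e, mem_support_iff.2 fun hc => he (by rw [hc, zero_mul])⟩
            · intro a _ b _ hab; simpa using hab
          have := Finset.card_erase_of_mem h0mem
          have := Finset.card_pos.2 ⟨0, h0mem⟩
          omega
        have : (D \ T).card ≤ D.card := Finset.card_le_card Finset.sdiff_subset
        omega

open Polynomial in
lemma key_card (l m : ℕ) (c : Fin m → ℝ) (hc : c ≠ 0) :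
    (Finset.univ.filter (fun j : Fin l =>
        (∑ i, c i * (((i : ℕ) + 1 : ℝ)) ^ ((j : ℕ) + 1)) = 0)).card
      < (Finset.univ.filter (fun i : Fin m => c i ≠ 0)).card := by
  classical
  set S := Finset.univ.filter (fun i : Fin m => c i ≠ 0) with hS
  set Z := Finset.univ.filter (fun j : Fin l =>
    (∑ i, c i * (((i : ℕ) + 1 : ℝ)) ^ ((j : ℕ) + 1)) = 0) with hZ
  by_contra hcon
  push_neg at hcon
  obtain ⟨T, hTZ, hTcard⟩ := Finset.exists_subset_card_eq hcon
  set u : ↥T → (↥S → ℝ) :=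
    fun j i => (((i : Fin m) : ℕ) + 1 : ℝ) ^ (((j : Fin l) : ℕ) + 1) with hu
  have hsum : ∀ j : Fin l, j ∈ Z →
      ∑ i : ↥S, c i * (((i : Fin m) : ℕ) + 1 : ℝ) ^ ((j : ℕ) + 1) = 0 := by
    intro j hj
    rw [hZ, Finset.mem_filter] at hj
    rw [← hj.2]
    rw [Finset.sum_coe_sort S (fun i => c i * (((i : ℕ) + 1 : ℝ)) ^ ((j : ℕ) + 1))]
    apply Finset.sum_filter_of_ne
    intro i _ hne hci
    exact hne (by rw [hci, zero_mul])
  by_cases hLI : LinearIndependent ℝ u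
  · -- then u spans, but it's orthogonal to the nonzero functional given by c
    have hcard : Fintype.card ↥T = Module.finrank ℝ (↥S → ℝ) := by
      rw [Module.finrank_fintype_fun_eq_card, Fintype.card_coe, Fintype.card_coe, hTcard]
    have hspan := hLI.span_eq_top_of_card_eq_finrank' hcard
    set φ : (↥S → ℝ) →ₗ[ℝ] ℝ :=
      ∑ i : ↥S, c i • LinearMap.proj i with hφ
    have hφapp : ∀ y : ↥S → ℝ, φ y = ∑ i : ↥S, c i * y i := by
      intro y; simp [hφ]
    have hφu : ∀ j : ↥T, φ (u j) = 0 := by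
      intro j
      rw [hφapp]
      exact hsum j (hTZ j.2)
    have hφ0 : φ = 0 := by
      have hker : Submodule.span ℝ (Set.range u) ≤ LinearMap.ker φ :=
        Submodule.span_le.2 (by rintro _ ⟨j, rfl⟩; exact hφu j)
      rw [hspan] at hker
      apply LinearMap.ext
      intro y
      simpa using hker (show y ∈ (⊤ : Submodule ℝ (↥S → ℝ)) from Submodule.mem_top)
    obtain ⟨i₀, hi₀⟩ : ∃ i, c i ≠ 0 := by
      by_contra hall
      push_neg at hall
      exact hc (funext hall)
    have hi₀S : i₀ ∈ S := by rw [hS]; simp [hi₀]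
    have : φ (Pi.single ⟨i₀, hi₀S⟩ 1) = c i₀ := by
      rw [hφapp]
      simp [Pi.single_apply]
    rw [hφ0] at this
    simp only [LinearMap.zero_apply] at this
    exact hi₀ this.symm
  · obtain ⟨g, hg0, j₀, hj₀⟩ := Fintype.not_linearIndependent_iff.1 hLI
    set P : ℝ[X] := ∑ j : ↥T, C (g j) * X ^ (((j : Fin l) : ℕ) + 1) with hP
    have hinj : ∀ a b : ↥T, ((a : Fin l) : ℕ) = ((b : Fin l) : ℕ) → a = b := by
      intro a b hab
      exact Subtype.ext (Fin.val_injective hab)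
    have hPcoeff : ∀ j : ↥T, P.coeff (((j : Fin l) : ℕ) + 1) = g j := by
      intro j
      rw [hP, finset_sum_coeff]
      rw [Finset.sum_eq_single j]
      · simp [coeff_C_mul, coeff_X_pow]
      · intro b _ hb
        rw [coeff_C_mul, coeff_X_pow, if_neg, mul_zero]
        intro hcontra
        exact hb (hinj b j (by omega))
      · intro hj; exact absurd (Finset.mem_univ j) hj
    have hPne : P ≠ 0 := by
      intro h
      apply hj₀
      rw [← hPcoeff j₀, h, coeff_zero]
    have hsupp : P.support.card ≤ T.card := by
      have hsub : P.support ⊆ Finset.image (fun j : ↥T => ((j : Fin l) : ℕ) + 1)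
          Finset.univ := by
        intro nn hn
        rw [mem_support_iff, hP, finset_sum_coeff] at hn
        obtain ⟨j, _, hj⟩ := Finset.exists_ne_zero_of_sum_ne_zero hn
        rw [coeff_C_mul, coeff_X_pow] at hj
        rw [Finset.mem_image]
        refine ⟨j, Finset.mem_univ j, ?_⟩
        by_contra hne
        rw [if_neg (fun h => hne h.symm), mul_zero] at hj
        exact hj rfl
      calc P.support.card ≤ _ := Finset.card_le_card hsub
        _ ≤ Finset.univ.card := Finset.card_image_le
        _ = T.card := Fintype.card_coe T
    set R : Finset ℝ := S.image (fun i : Fin m => ((i : ℕ) + 1 : ℝ)) with hR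
    have hRcard : R.card = S.card := by
      rw [hR]
      apply Finset.card_image_of_injective
      intro a b hab
      simp only at hab
      have : ((a : ℕ) : ℝ) = ((b : ℕ) : ℝ) := by linarith
      exact Fin.val_injective (Nat.cast_injective this)
    have hroots : ∀ r ∈ R, 0 < r ∧ P.IsRoot r := by
      intro r hr
      rw [hR, Finset.mem_image] at hr
      obtain ⟨i, hiS, rfl⟩ := hr
      constructor
      · positivity
      · have hgi := congrFun hg0 ⟨i, hiS⟩
        rw [IsRoot, hP]
        rw [eval_finset_sum]
        simp only [eval_mul, eval_C, eval_pow, eval_X]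
        simpa [hu] using hgi
    have := descartes_aux P.natDegree P le_rfl hPne R hroots
    omega

/-- The vectors `v_i = α_i ⊕ e_i ∈ ℝ^k ≃ ℝ^ℓ ⊕ ℝ^{k-ℓ}`, where `α_{i,j} = i^j`
(for `1 ≤ i ≤ k-ℓ`, `1 ≤ j ≤ ℓ`) and `e_i` is the `i`-th standard basis vector of
`ℝ^{k-ℓ}`. The index `i : Fin (k-ℓ)` corresponds to the integer `i+1` and the coordinate
`j : Fin ℓ` to the exponent `j+1`. -/
noncomputable def vandVec (k l : ℕ) (i : Fin (k - l)) : (Fin l ⊕ Fin (k - l)) → ℝ :=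
  Sum.elim (fun j => ((i : ℕ) + 1 : ℝ) ^ ((j : ℕ) + 1)) (fun j => if j = i then 1 else 0)

/-- The span `X` of the vectors `v_1, …, v_{k-ℓ}` has dimension `k - ℓ`
and every nonzero `x ∈ X` has support of size at least `ℓ + 1`. -/
theorem stmt17 (k l : ℕ) (h : l ≤ k) :
    Module.finrank ℝ ↥(Submodule.span ℝ (Set.range (vandVec k l))) = k - l ∧
      ∀ x ∈ Submodule.span ℝ (Set.range (vandVec k l)), x ≠ 0 →
        l + 1 ≤ {j : Fin l ⊕ Fin (k - l) | x j ≠ 0}.ncard := by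
  classical
  have hLI : LinearIndependent ℝ (vandVec k l) := by
    apply LinearIndependent.of_comp (LinearMap.funLeft ℝ ℝ Sum.inr)
    have heq : (LinearMap.funLeft ℝ ℝ Sum.inr) ∘ (vandVec k l)
        = fun i => Pi.single i (1 : ℝ) := by
      funext i j
      simp [vandVec, LinearMap.funLeft, Pi.single_apply]
    rw [heq]
    have := (Pi.basisFun ℝ (Fin (k - l))).linearIndependent
    convert this using 1
    funext i
    rw [Pi.basisFun_apply]
  refine ⟨by rw [finrank_span_eq_card hLI, Fintype.card_fin], ?_⟩
  intro x hx hx0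
  obtain ⟨c, hcx⟩ := (Submodule.mem_span_range_iff_exists_fun ℝ).1 hx
  have hinr : ∀ j, x (Sum.inr j) = c j := by
    intro j
    rw [← hcx]
    simp [vandVec, Finset.sum_apply]
  have hinl : ∀ j : Fin l,
      x (Sum.inl j) = ∑ i, c i * (((i : ℕ) + 1 : ℝ)) ^ ((j : ℕ) + 1) := by
    intro j
    rw [← hcx]
    simp [vandVec, Finset.sum_apply]
  have hc : c ≠ 0 := by
    intro hcc
    exact hx0 (by rw [← hcx, hcc]; simp)
  have hkey := key_card l (k - l) c hc
  have hseteq : {j : Fin l ⊕ Fin (k - l) | x j ≠ 0}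
      = (Sum.inl '' {j | x (Sum.inl j) ≠ 0}) ∪ (Sum.inr '' {j | x (Sum.inr j) ≠ 0}) := by
    ext j
    cases j <;> simp
  have hdisj : Disjoint (Sum.inl '' {j : Fin l | x (Sum.inl j) ≠ 0})
      (Sum.inr '' {j : Fin (k - l) | x (Sum.inr j) ≠ 0}) := by
    rw [Set.disjoint_left]
    rintro _ ⟨a, _, rfl⟩ ⟨b, _, hb⟩
    exact Sum.inr_ne_inl hb
  rw [hseteq, Set.ncard_union_eq hdisj (Set.toFinite _) (Set.toFinite _),
    Set.ncard_image_of_injective _ Sum.inl_injective,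
    Set.ncard_image_of_injective _ Sum.inr_injective]
  have h1 : {j : Fin l | x (Sum.inl j) ≠ 0}.ncard
      = (Finset.univ.filter fun j : Fin l => ¬ (x (Sum.inl j) = 0)).card := by
    rw [← Set.ncard_coe_finset]
    congr 1
    ext j
    simp
  have h2 : {j : Fin (k - l) | x (Sum.inr j) ≠ 0}.ncard
      = (Finset.univ.filter fun j : Fin (k - l) => c j ≠ 0).card := by
    rw [← Set.ncard_coe_finset]
    congr 1
    ext j
    simp [hinr j]
  rw [h1, h2]
  have h3 : (Finset.univ.filter fun j : Fin l => x (Sum.inl j) = 0).card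
      + (Finset.univ.filter fun j : Fin l => ¬ (x (Sum.inl j) = 0)).card = l := by
    rw [Finset.card_filter_add_card_filter_not, Finset.card_univ, Fintype.card_fin]
  have h4 : (Finset.univ.filter fun j : Fin l => x (Sum.inl j) = 0)
      = (Finset.univ.filter fun j : Fin l =>
          (∑ i, c i * (((i : ℕ) + 1 : ℝ)) ^ ((j : ℕ) + 1)) = 0) := by
    apply Finset.filter_congr
    intro j _
    rw [hinl j]
  rw [h4] at h3
  omega
end
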